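/- Let r, k ≥ 1 and let f_1,…,f_r, f_{r+1} : ℕ → [k] be k-colourings. If the colours c_1,…,c_r ∈ [k] are large with respect to f_1,…,f_r, then there exists a colour c_{r+1} ∈ [k] such that c_1,…,c_r,c_{r+1} is large with respect to f_1,…,f_r,f_{r+1}. -/
import Mathlib

open Combinatorics in
/-- A finitary van der Waerden theorem, derived from the Hales–Jewett theorem. -/
lemma finVdW (M k : ℕ) :
    ∃ N : ℕ, ∀ C : ℕ → Fin k, ∃ b e : ℕ, 1 ≤ e ∧
      ∀ t < M, b + e * t < N ∧ C (b + e * t) = C b := by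
  rcases Nat.eq_zero_or_pos M with hM | hM
  · exact ⟨1, fun C => ⟨0, 1, le_refl 1, fun t ht => absurd ht (by omega)⟩⟩
  obtain ⟨ι, _inst, hι⟩ := Line.exists_mono_in_high_dimension (Fin M) (Fin k)
  refine ⟨Fintype.card ι * M + 1, fun C => ?_⟩
  classical
  obtain ⟨l, cc, hl⟩ := hι fun v => C (∑ i, (v i : ℕ))
  set s : Finset ι := Finset.univ.filter (fun i => l.idxFun i = none) with hs
  set b : ℕ := ∑ i ∈ sᶜ, ((l.idxFun i).map (fun x : Fin M => (x : ℕ))).getD 0 with hb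
  have key : ∀ x : Fin M, (∑ i, (((l.idxFun i).getD x : Fin M) : ℕ)) = b + s.card * (x : ℕ) := by
    intro x
    rw [← Finset.sum_add_sum_compl s]
    rw [add_comm b]
    congr 1
    · calc ∑ i ∈ s, (((l.idxFun i).getD x : Fin M) : ℕ)
          = ∑ _i ∈ s, (x : ℕ) := by
            apply Finset.sum_congr rfl
            intro i hi
            rw [hs, Finset.mem_filter] at hi
            rw [hi.2]
            rfl
        _ = s.card * (x : ℕ) := by rw [Finset.sum_const, smul_eq_mul]
    · apply Finset.sum_congr rfl
      intro i hi
      rw [hs, Finset.compl_filter, Finset.mem_filter] at hi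
      obtain ⟨y, hy⟩ := Option.ne_none_iff_exists.mp hi.right
      simp [← hy]
  have hl' : ∀ x : Fin M, C (b + s.card * (x : ℕ)) = cc := by
    intro x
    have h := hl x
    simp only [Line.apply_def] at h
    rwa [key x] at h
  have hcard : 1 ≤ s.card := Finset.card_pos.mpr ⟨l.proper.choose, by
    rw [hs, Finset.mem_filter]; exact ⟨Finset.mem_univ _, l.proper.choose_spec⟩⟩
  refine ⟨b, s.card, hcard, fun t ht => ?_⟩
  have h1 : C (b + s.card * t) = cc := hl' ⟨t, ht⟩
  have h0 : C b = cc := by simpa using hl' ⟨0, hM⟩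
  refine ⟨?_, by rw [h1, h0]⟩
  have hbd : (∑ i, (((l.idxFun i).getD (⟨t, ht⟩ : Fin M) : Fin M) : ℕ))
      ≤ Fintype.card ι * (M - 1) := by
    calc (∑ i, (((l.idxFun i).getD (⟨t, ht⟩ : Fin M) : Fin M) : ℕ))
        ≤ ∑ _i : ι, (M - 1) := by
          apply Finset.sum_le_sum
          intro i _
          have := ((l.idxFun i).getD (⟨t, ht⟩ : Fin M)).isLt
          omega
      _ = Fintype.card ι * (M - 1) := by simp [Finset.sum_const, mul_comm]
  rw [key ⟨t, ht⟩] at hbd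
  have : Fintype.card ι * (M - 1) ≤ Fintype.card ι * M := by
    apply Nat.mul_le_mul_left; omega
  simp only [Fin.val_mk] at hbd
  omega

/-- Colours `c_1,…,c_r` are large with respect to colourings `F_1,…,F_r` if for every `M`
there is an arithmetic progression of length `M` (with positive common difference) on
which each `F_i` is constantly `c_i`. -/
def IsLarge {k r : ℕ} (c : Fin r → Fin k) (F : Fin r → ℕ → Fin k) : Prop :=
  ∀ M : ℕ, ∃ a d : ℕ, 1 ≤ d ∧ ∀ i : Fin r, ∀ t < M, F i (a + d * t) = c i

/-- **Extension lemma.** If `c_1,…,c_r` is large with respect to `f_1,…,f_r`, then for any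
further colouring `f_{r+1}` there is a colour `c_{r+1}` such that `c_1,…,c_{r+1}` is
large with respect to `f_1,…,f_{r+1}`. -/
theorem extension_lemma (r k : ℕ) (hr : 1 ≤ r) (hk : 1 ≤ k)
    (F : Fin (r + 1) → ℕ → Fin k) (c : Fin r → Fin k)
    (hc : IsLarge c (fun i : Fin r => F i.castSucc)) :
    ∃ c' : Fin k, IsLarge (Fin.snoc c c') F := by
  classical
  have step : ∀ M : ℕ, ∃ (c' : Fin k) (a d : ℕ), 1 ≤ d ∧
      (∀ i : Fin r, ∀ t < M, F i.castSucc (a + d * t) = c i) ∧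
      (∀ t < M, F (Fin.last r) (a + d * t) = c') := by
    intro M
    obtain ⟨N, hN⟩ := finVdW M k
    obtain ⟨a, d, hd, hAP⟩ := hc N
    obtain ⟨b, e, he, hbe⟩ := hN (fun t => F (Fin.last r) (a + d * t))
    refine ⟨F (Fin.last r) (a + d * b), a + d * b, d * e, Nat.one_le_iff_ne_zero.mpr
      (by positivity), ?_, ?_⟩
    · intro i t ht
      have h : a + d * b + d * e * t = a + d * (b + e * t) := by ring
      rw [h]
      exact hAP i (b + e * t) (hbe t ht).1
    · intro t ht
      have h : a + d * b + d * e * t = a + d * (b + e * t) := by ring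
      rw [h]
      exact (hbe t ht).2
  choose g a d hd h1 h2 using step
  haveI : Nonempty (Fin k) := ⟨⟨0, hk⟩⟩
  obtain ⟨c', hc'⟩ := Finite.exists_infinite_fiber g
  refine ⟨c', fun M => ?_⟩
  have hinf : (g ⁻¹' {c'}).Infinite := Set.infinite_coe_iff.mp hc'
  obtain ⟨M', hM'mem, hM'⟩ := hinf.exists_gt M
  refine ⟨a M', d M', hd M', fun i t ht => ?_⟩
  have ht' : t < M' := lt_trans ht hM'
  refine Fin.lastCases ?_ ?_ i
  · rw [Fin.snoc_last]
    have := h2 M' t ht'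
    rwa [hM'mem] at this
  · intro j
    rw [Fin.snoc_castSucc]
    exact h1 M' j t ht'
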